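/- Let M be the k×k integer tridiagonal matrix with diagonal entries h_1,...,h_k and all sub- and super-diagonal entries equal to 1. Define r_1 = h_1, r_2 = 1 - r_1 h_2, and r_i = -r_{i-1} h_i - r_{i-2} for 3 ≤ i ≤ k. Then the Smith normal form of M is the diagonal matrix diag(1, 1, ..., 1, ±r_k); equivalently, M is equivalent over ℤ to diag(1,...,1,r_k) up to sign. -/

import Mathlib

open Matrix

/-- The `k×k` symmetric tridiagonal integer matrix with diagonal `h 1, ..., h k` and
sub/super-diagonal entries `1`. -/
def Mtri (h : ℕ → ℤ) (k : ℕ) : Matrix (Fin k) (Fin k) ℤ :=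
  fun i j =>
    if i = j then h (i.val + 1)
    else if i.val + 1 = j.val ∨ j.val + 1 = i.val then 1 else 0

/-- `r h : r 1 = h 1`, `r 2 = 1 - r 1 * h 2`, `r i = -r (i-1) * h i - r (i-2)`
(with the convention `r 0 = -1`, which makes the last clause uniform). -/
def r (h : ℕ → ℤ) : ℕ → ℤ
  | 0 => -1
  | 1 => h 1
  | n + 2 => -(r h (n + 1)) * h (n + 2) - r h n

namespace SNFtri
variable (h : ℕ → ℤ)

lemma r_rec (j : ℕ) : r h (j+2) = -(r h (j+1)) * h (j+2) - r h j := by rw [r]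

def Gm (h : ℕ → ℤ) (j : ℕ) (m : ℕ) : Matrix (Fin m) (Fin m) ℤ :=
  Matrix.of fun i l =>
    if i = l then (if i.val = 0 then r h j else h (j + i.val))
    else if i.val = 0 ∧ l.val = 1 then -(r h (j-1))
    else if i.val + 1 = l.val ∨ l.val + 1 = i.val then 1 else 0

lemma Gm_apply (j m : ℕ) (i l : Fin m) : Gm h j m i l =
    if i.val = l.val then (if i.val = 0 then r h j else h (j + i.val))
    else if i.val = 0 ∧ l.val = 1 then -(r h (j-1))
    else if i.val + 1 = l.val ∨ l.val + 1 = i.val then 1 else 0 := by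
  simp only [Gm, Matrix.of_apply, Fin.ext_iff]

lemma Mtri_eq_Gm (k : ℕ) : Mtri h k = Gm h 1 k := by
  ext i l
  rcases eq_or_ne i l with rfl | hne
  · rcases Nat.eq_zero_or_pos i.val with h0 | h0
    · simp [Mtri, Gm, h0, r]
    · have h0' : i.val ≠ 0 := by omega
      simp [Mtri, Gm, h0', Nat.add_comm]
  · have hv : i.val ≠ l.val := fun hh => hne (Fin.ext hh)
    by_cases hc : i.val = 0 ∧ l.val = 1
    · have hadj : i.val + 1 = l.val ∨ l.val + 1 = i.val := by omega
      simp only [Mtri, Gm, Matrix.of_apply, if_neg hne, if_pos hc, if_pos hadj]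
      norm_num [r]
    · simp only [Mtri, Gm, Matrix.of_apply, if_neg hne, if_neg hc]

def oneAdd {s : ℕ} (M : Matrix (Fin s) (Fin s) ℤ) : Matrix (Fin (s+1)) (Fin (s+1)) ℤ :=
  Matrix.of fun i l =>
    Fin.cases (Fin.cases 1 (fun _ => 0) l) (fun i' => Fin.cases 0 (fun l' => M i' l') l) i

@[simp] lemma oneAdd_zero_zero {s} (M : Matrix (Fin s) (Fin s) ℤ) : oneAdd M 0 0 = 1 := by
  simp [oneAdd]
@[simp] lemma oneAdd_zero_succ {s} (M : Matrix (Fin s) (Fin s) ℤ) (l : Fin s) :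
    oneAdd M 0 l.succ = 0 := by simp [oneAdd]
@[simp] lemma oneAdd_succ_zero {s} (M : Matrix (Fin s) (Fin s) ℤ) (i : Fin s) :
    oneAdd M i.succ 0 = 0 := by simp [oneAdd]
@[simp] lemma oneAdd_succ_succ {s} (M : Matrix (Fin s) (Fin s) ℤ) (i l : Fin s) :
    oneAdd M i.succ l.succ = M i l := by simp [oneAdd]

lemma oneAdd_mul {s} (A B : Matrix (Fin s) (Fin s) ℤ) :
    oneAdd A * oneAdd B = oneAdd (A * B) := by
  ext i l
  rw [Matrix.mul_apply, Fin.sum_univ_succ]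
  induction i using Fin.cases with
  | zero =>
    induction l using Fin.cases with
    | zero => simp
    | succ l' => simp
  | succ i' =>
    induction l using Fin.cases with
    | zero => simp
    | succ l' => simp [Matrix.mul_apply]

lemma det_oneAdd {s} (M : Matrix (Fin s) (Fin s) ℤ) : (oneAdd M).det = M.det := by
  rw [Matrix.det_succ_row_zero]
  rw [Finset.sum_eq_single 0]
  · have h2 : (oneAdd M).submatrix Fin.succ Fin.succ = M := by
      ext i l
      simp
    simp [Fin.succAbove_zero, h2]
  · intro b _ hb
    obtain ⟨b', rfl⟩ := Fin.exists_succ_eq.2 hb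
    simp
  · simp

set_option maxHeartbeats 1000000 in
lemma step (j m : ℕ) :
    (Equiv.swap (0 : Fin (m+3)) 1).permMatrix ℤ *
      (Matrix.transvection 0 1 (-(r h (j+1))) * Gm h (j+1) (m+3) *
        (Matrix.transvection 0 1 (-(h (j+2))) * Matrix.transvection 0 2 (-1)))
      = oneAdd (Gm h (j+2) (m+2)) := by
  have v1 : (1 : Fin (m+3)).val = 1 := rfl
  have v2 : (2 : Fin (m+3)).val = 2 := rfl
  have n01 : (0 : Fin (m+3)) ≠ 1 := by simp [Fin.ext_iff]
  have n12 : (1 : Fin (m+3)) ≠ 2 := by rw [Ne, Fin.ext_iff, v1, v2]; omega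
  have n02 : (0 : Fin (m+3)) ≠ 2 := by rw [Ne, Fin.ext_iff, v2]; simp
  have hsub : (j + 1) - 1 = j := by omega
  have hsub2 : (j + 2) - 1 = j + 1 := by omega
  have e2 : j + 1 + 1 = j + 2 := rfl
  set A := Gm h (j+1) (m+3) with hA
  set X : Matrix (Fin (m+3)) (Fin (m+3)) ℤ := Matrix.of (fun i l =>
    if i.val = 0 then (if l.val = 1 then r h (j+2) else if l.val = 2 then -(r h (j+1)) else 0)
    else A i l) with hXdef
  have hXe : ∀ i l : Fin (m+3), X i l =
      if i.val = 0 then (if l.val = 1 then r h (j+2) else if l.val = 2 then -(r h (j+1)) else 0)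
      else Gm h (j+1) (m+3) i l := fun i l => rfl
  have hX : Matrix.transvection 0 1 (-(r h (j+1))) * A = X := by
    ext i l
    by_cases hi : i = 0
    · subst hi
      rw [Matrix.transvection_mul_apply_same]
      simp only [hXe, hA, Gm_apply, Matrix.of_apply, Fin.val_zero, v1, hsub, e2,
        eq_self_iff_true, if_true, true_and, false_and, and_false, or_false, false_or,
        one_ne_zero, Nat.succ_ne_zero, if_false]
      split_ifs <;> first
        | (exfalso; (try simp only [or_false, false_or, false_and, and_false, and_self, not_false_iff, Fin.val_succ, Fin.val_zero] at *); all_goals omega)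
        | ring1
        | (rw [r_rec]; ring1)
    · rw [Matrix.transvection_mul_apply_of_ne _ _ _ _ hi]
      have : ¬ i.val = 0 := fun hh => hi (Fin.ext hh)
      simp [hXe, this, hA]
  set Y : Matrix (Fin (m+3)) (Fin (m+3)) ℤ := Matrix.of (fun i l =>
    if i.val = 1 then (if l.val = 0 then 1 else 0) else X i l) with hYdef
  have hYe : ∀ i l : Fin (m+3), Y i l =
      if i.val = 1 then (if l.val = 0 then 1 else 0) else X i l := fun i l => rfl
  have hY : X * Matrix.transvection 0 1 (-(h (j+2))) * Matrix.transvection 0 2 (-1) = Y := by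
    ext i l
    rcases eq_or_ne l 2 with rfl | hl2
    · rw [Matrix.mul_transvection_apply_same,
        Matrix.mul_transvection_apply_of_ne (hb := n12.symm),
        Matrix.mul_transvection_apply_of_ne (hb := n01)]
      simp only [hYe, hXe, Gm_apply, Fin.val_zero, v1, v2, hsub, e2,
        eq_self_iff_true, if_true, true_and, false_and, and_false, or_false, false_or,
        one_ne_zero, Nat.succ_ne_zero, if_false]
      split_ifs <;> first
        | (exfalso; (try simp only [or_false, false_or, false_and, and_false, and_self, not_false_iff, Fin.val_succ, Fin.val_zero] at *); all_goals omega)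
        | ring1
        | (rw [show j + 1 + (i : ℕ) = j + 2 from by omega]; ring1)
    · rw [Matrix.mul_transvection_apply_of_ne (hb := hl2)]
      have hl2' : ¬ l.val = 2 := by
        intro hh; exact hl2 (Fin.ext (by rw [hh, v2]))
      rcases eq_or_ne l 1 with rfl | hl1
      · rw [Matrix.mul_transvection_apply_same]
        simp only [hYe, hXe, Gm_apply, Fin.val_zero, v1, v2, hsub, e2,
          eq_self_iff_true, if_true, true_and, false_and, and_false, or_false, false_or,
          one_ne_zero, Nat.succ_ne_zero, if_false]
        split_ifs <;> first
          | (exfalso; (try simp only [or_false, false_or, false_and, and_false, and_self, not_false_iff, Fin.val_succ, Fin.val_zero] at *); all_goals omega)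
          | ring1
          | (rw [show j + 1 + (i : ℕ) = j + 2 from by omega]; ring1)
      · rw [Matrix.mul_transvection_apply_of_ne (hb := hl1)]
        have hl1' : ¬ l.val = 1 := by
          intro hh; exact hl1 (Fin.ext (by rw [hh, v1]))
        simp only [hYe, hXe, Gm_apply, Fin.val_zero, v1, v2, hsub, e2,
          eq_self_iff_true, if_true, true_and, false_and, and_false, or_false, false_or,
          one_ne_zero, Nat.succ_ne_zero, if_false]
        split_ifs <;> first
          | rfl
          | (exfalso; (try simp only [or_false, false_or, false_and, and_false, and_self, not_false_iff, Fin.val_succ, Fin.val_zero] at *); all_goals omega)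
          | ring1
  have hassoc : Matrix.transvection 0 1 (-(r h (j+1))) * Gm h (j+1) (m+3) *
      (Matrix.transvection 0 1 (-(h (j+2))) * Matrix.transvection (0 : Fin (m+3)) 2 (-1)) = Y := by
    rw [← Matrix.mul_assoc, hX, hY]
  rw [hassoc, Equiv.Perm.permMatrix, PEquiv.toMatrix_toPEquiv_mul]
  ext i l
  rw [Matrix.submatrix_apply, id]
  induction i using Fin.cases with
  | zero =>
    rw [Equiv.swap_apply_left]
    induction l using Fin.cases with
    | zero => simp [hYe, v1]
    | succ l' => simp [hYe, v1, Fin.val_succ]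
  | succ i' =>
    induction i' using Fin.cases with
    | zero =>
      rw [show Equiv.swap (0 : Fin (m+3)) 1 (Fin.succ 0) = 0 from by
        rw [Fin.succ_zero_eq_one]; exact Equiv.swap_apply_right _ _]
      induction l using Fin.cases with
      | zero =>
        rw [oneAdd_succ_zero]
        simp [hYe, hXe]
      | succ l' =>
        rw [oneAdd_succ_succ]
        simp only [hYe, hXe, Gm_apply, Fin.val_zero, Fin.val_succ, hsub2,
          eq_self_iff_true, if_true, true_and, false_and, and_false, or_false, false_or,
          one_ne_zero, Nat.succ_ne_zero, if_false]
        split_ifs <;> first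
          | rfl
          | (exfalso; (try simp only [or_false, false_or, false_and, and_false, and_self, not_false_iff, Fin.val_succ, Fin.val_zero] at *); all_goals omega)
    | succ i'' =>
      have hne0 : i''.succ.succ ≠ (0 : Fin (m+3)) := Fin.succ_ne_zero _
      have hne1 : i''.succ.succ ≠ (1 : Fin (m+3)) := by
        intro hh
        have := congrArg Fin.val hh
        simp [Fin.val_succ, v1] at this
      rw [Equiv.swap_apply_of_ne_of_ne hne0 hne1]
      have hv1 : ¬ (i''.succ.succ : Fin (m+3)).val = 1 := by
        intro hh; exact hne1 (Fin.ext (by rw [hh, v1]))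
      have hv0 : ¬ (i''.succ.succ : Fin (m+3)).val = 0 := by
        simp [Fin.val_succ]
      induction l using Fin.cases with
      | zero =>
        rw [oneAdd_succ_zero]
        simp only [hYe, hXe, hv1, hv0, if_false]
        rw [Gm_apply]
        simp only [Fin.val_succ, Fin.val_zero]
        split_ifs <;> first | rfl | (exfalso; (try simp only [or_false, false_or, false_and, and_false, and_self, not_false_iff, Fin.val_succ, Fin.val_zero] at *); all_goals omega)
      | succ l' =>
        rw [oneAdd_succ_succ]
        simp only [hYe, hXe, hv1, hv0, if_false]
        rw [Gm_apply, Gm_apply]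
        simp only [Fin.val_succ]
        split_ifs <;> first
          | rfl
          | (exfalso; (try simp only [or_false, false_or, false_and, and_false, and_self, not_false_iff, Fin.val_succ, Fin.val_zero] at *); all_goals omega)
          | (congr 1 <;> omega)

lemma oneAdd_diagonal {s} (f : Fin s → ℤ) :
    oneAdd (Matrix.diagonal f) = Matrix.diagonal (fun i : Fin (s+1) => Fin.cases 1 f i) := by
  ext i l
  induction i using Fin.cases with
  | zero =>
    induction l using Fin.cases with
    | zero => simp
    | succ l' => simp [Matrix.diagonal_apply_ne _ (Fin.succ_ne_zero l').symm]
  | succ i' =>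
    induction l using Fin.cases with
    | zero => simp [Matrix.diagonal_apply_ne _ (Fin.succ_ne_zero i')]
    | succ l' =>
      rcases eq_or_ne i' l' with rfl | hne
      · simp
      · simp [Matrix.diagonal_apply_ne _ hne,
          Matrix.diagonal_apply_ne _ (fun hh => hne (Fin.succ_injective _ hh))]

theorem key : ∀ (m j : ℕ),
    ∃ P Q : Matrix (Fin (m+1)) (Fin (m+1)) ℤ, IsUnit P.det ∧ IsUnit Q.det ∧
      P * Gm h (j+1) (m+1) * Q =
        Matrix.diagonal (fun i : Fin (m+1) => if i.val = m then r h (j+1+m) else 1)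
  | 0, j => by
    refine ⟨1, 1, by simp, by simp, ?_⟩
    rw [Matrix.one_mul, Matrix.mul_one]
    ext i l
    have hi : i = 0 := Fin.ext (by omega)
    have hl : l = 0 := Fin.ext (by omega)
    subst hi; subst hl
    simp [Gm_apply]
  | 1, j => by
    refine ⟨!![0,1;1,-(r h (j+1))], !![1, -(h (j+2)); 0,1], ?_, ?_, ?_⟩
    · rw [Matrix.det_fin_two_of]
      norm_num
    · rw [Matrix.det_fin_two_of]
      norm_num
    · ext i l
      fin_cases i <;> fin_cases l <;>
        simp [Matrix.mul_apply, Matrix.vecMul, dotProduct, Fin.sum_univ_two, Gm_apply,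
          Matrix.diagonal, r_rec] <;>
        ring1
  | (m+2), j => by
    obtain ⟨P', Q', hu1, hu2, hPQ⟩ := key (m+1) (j+1)
    have n01 : (0 : Fin (m+3)) ≠ 1 := by simp [Fin.ext_iff]
    have n02 : (0 : Fin (m+3)) ≠ 2 := by
      rw [Ne, Fin.ext_iff, show ((2:Fin (m+3)).val = 2) from rfl]; simp
    refine ⟨oneAdd P' * ((Equiv.swap (0 : Fin (m+3)) 1).permMatrix ℤ *
        Matrix.transvection 0 1 (-(r h (j+1)))),
      (Matrix.transvection 0 1 (-(h (j+2))) * Matrix.transvection 0 2 (-1)) * oneAdd Q',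
      ?_, ?_, ?_⟩
    · have hdS : ((Equiv.swap (0 : Fin (m+3)) 1).permMatrix ℤ).det = -1 := by
        rw [Matrix.det_permutation, Equiv.Perm.sign_swap n01]
        simp
      rw [Matrix.det_mul, Matrix.det_mul, det_oneAdd, hdS,
        Matrix.det_transvection_of_ne _ _ n01]
      simpa using hu1.neg
    · rw [Matrix.det_mul, Matrix.det_mul, det_oneAdd,
        Matrix.det_transvection_of_ne _ _ n01, Matrix.det_transvection_of_ne _ _ n02]
      simpa using hu2
    · calc oneAdd P' * ((Equiv.swap (0 : Fin (m+3)) 1).permMatrix ℤ *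
            Matrix.transvection 0 1 (-(r h (j+1)))) * Gm h (j+1) (m+3) *
            ((Matrix.transvection 0 1 (-(h (j+2))) * Matrix.transvection 0 2 (-1)) * oneAdd Q')
          = oneAdd P' * ((Equiv.swap (0 : Fin (m+3)) 1).permMatrix ℤ *
            (Matrix.transvection 0 1 (-(r h (j+1))) * Gm h (j+1) (m+3) *
              (Matrix.transvection 0 1 (-(h (j+2))) * Matrix.transvection 0 2 (-1)))) *
            oneAdd Q' := by
            simp only [Matrix.mul_assoc]
      _ = oneAdd P' * oneAdd (Gm h (j+2) (m+2)) * oneAdd Q' := by rw [step]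
      _ = oneAdd (P' * Gm h (j+2) (m+2) * Q') := by rw [oneAdd_mul, oneAdd_mul]
      _ = oneAdd (Matrix.diagonal
            (fun i : Fin (m+2) => if i.val = m+1 then r h (j+1+1+(m+1)) else 1)) := by
            have hG : Gm h (j+2) (m+2) = Gm h (j+1+1) (m+1+1) := rfl
            rw [hG, hPQ]
      _ = Matrix.diagonal (fun i : Fin (m+3) => if i.val = m+2 then r h (j+1+(m+2)) else 1) := by
            rw [oneAdd_diagonal]
            have hfun : (fun i : Fin (m+3) => (Fin.cases 1
                (fun i' : Fin (m+2) => if i'.val = m+1 then r h (j+1+1+(m+1)) else 1) i : ℤ))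
                = (fun i : Fin (m+3) => if i.val = m+2 then r h (j+1+(m+2)) else 1) := by
              funext i
              induction i using Fin.cases with
              | zero => simp
              | succ i' =>
                rw [Fin.cases_succ]
                simp only [Fin.val_succ]
                split_ifs <;> first | rfl | (exfalso; omega) | (congr 1; omega)
            rw [hfun]
  termination_by m j => m

end SNFtri

/-- The Smith normal form of the tridiagonal matrix `Mtri h k` is `diag(1,...,1, ±r_k)`:
`Mtri h k` is equivalent over `ℤ` (via invertible integer row and column operations) to that
diagonal matrix. -/
theorem smithNormalForm_tridiagonal (k : ℕ) (hk : 1 ≤ k) (h : ℕ → ℤ) :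
    ∃ P Q : Matrix (Fin k) (Fin k) ℤ, IsUnit P.det ∧ IsUnit Q.det ∧
      ∃ ε : ℤ, (ε = 1 ∨ ε = -1) ∧
        P * Mtri h k * Q =
          Matrix.diagonal fun i : Fin k => if i.val = k - 1 then ε * r h k else 1 := by
  obtain ⟨m, rfl⟩ : ∃ m, k = m + 1 := ⟨k - 1, by omega⟩
  obtain ⟨P, Q, h1, h2, h3⟩ := SNFtri.key h m 0
  refine ⟨P, Q, h1, h2, 1, Or.inl rfl, ?_⟩
  have hfun : (fun i : Fin (m+1) => if i.val = m then r h (0+1+m) else 1)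
      = (fun i : Fin (m+1) => if i.val = m + 1 - 1 then 1 * r h (m+1) else 1) := by
    funext i
    rw [show m + 1 - 1 = m from by omega, one_mul]
    split_ifs <;> first | (exfalso; omega) | rfl | (congr 1; omega)
  rw [SNFtri.Mtri_eq_Gm, show SNFtri.Gm h 1 (m+1) = SNFtri.Gm h (0+1) (m+1) from rfl, h3, hfun]
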